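/- Let ⊢⊣, → be relations on a set A such that ⊢⊣ is symmetric and → ∘ ⊢⊣* is well-founded. Then → is Church-Rosser modulo ⊢⊣* if and only if both (i) ← ∘ → ⊆ →* ∘ ⊢⊣* ∘ ←*, and (ii) ⊢⊣ ∘ → ⊆ →+ ∘ ⊢⊣* ∘ ←*. -/

import Mathlib

namespace CRM

open Relation

variable {A : Type*} {hd ar : A → A → Prop}

/-- labeled conversions -/
inductive Conv (hd ar : A → A → Prop) : A → A → Type _ where
  | nil (a : A) : Conv hd ar a a
  | fwd {a b c : A} (h : ar a b) (t : Conv hd ar b c) : Conv hd ar a c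
  | bwd {a b c : A} (h : ar b a) (t : Conv hd ar b c) : Conv hd ar a c
  | eq  {a b c : A} (h : hd a b) (t : Conv hd ar b c) : Conv hd ar a c

namespace Conv

def mu : ∀ {a b : A}, Conv hd ar a b → Multiset A
  | a, _, .nil _ => {a}
  | a, _, .fwd _ t => a ::ₘ t.mu
  | a, _, .bwd _ t => a ::ₘ t.mu
  | a, _, .eq _ t => a ::ₘ t.mu

def isBwd : ∀ {a b : A}, Conv hd ar a b → Prop
  | _, _, .nil _ => True
  | _, _, .bwd _ t => t.isBwd
  | _, _, .fwd _ _ => False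
  | _, _, .eq _ _ => False

def isEqBwd : ∀ {a b : A}, Conv hd ar a b → Prop
  | _, _, .nil _ => True
  | _, _, .eq _ t => t.isEqBwd
  | _, _, .bwd _ t => t.isBwd
  | _, _, .fwd _ _ => False

def isValley : ∀ {a b : A}, Conv hd ar a b → Prop
  | _, _, .fwd _ t => t.isValley
  | _, _, .eq _ t => t.isEqBwd
  | _, _, .bwd _ t => t.isBwd
  | _, _, .nil _ => True

lemma isBwd_spec : ∀ {a b : A} (c : Conv hd ar a b), c.isBwd → ReflTransGen ar b a
  | _, _, .nil _, _ => .refl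
  | _, _, .bwd h t, hv => (isBwd_spec t hv).tail h
  | _, _, .fwd _ _, hv => hv.elim
  | _, _, .eq _ _, hv => hv.elim

lemma isEqBwd_spec : ∀ {a b : A} (c : Conv hd ar a b), c.isEqBwd →
    ∃ v, ReflTransGen hd a v ∧ ReflTransGen ar b v
  | _, _, .nil a, _ => ⟨a, .refl, .refl⟩
  | _, _, .eq h t, hv =>
    let ⟨v, h1, h2⟩ := isEqBwd_spec t hv
    ⟨v, .head h h1, h2⟩
  | a, _, .bwd h t, hv => ⟨_, .refl, (isBwd_spec t hv).tail h⟩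
  | _, _, .fwd _ _, hv => hv.elim

lemma isValley_spec : ∀ {a b : A} (c : Conv hd ar a b), c.isValley →
    ∃ u v, ReflTransGen ar a u ∧ ReflTransGen hd u v ∧ ReflTransGen ar b v
  | _, _, .fwd h t, hv =>
    let ⟨u, v, h1, h2, h3⟩ := isValley_spec t hv
    ⟨u, v, .head h h1, h2, h3⟩
  | _, _, .nil a, _ => ⟨a, a, .refl, .refl, .refl⟩
  | _, _, .eq h t, hv =>
    let ⟨v, h1, h2⟩ := isEqBwd_spec (Conv.eq h t) hv
    ⟨_, v, .refl, h1, h2⟩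
  | _, _, .bwd h t, hv =>
    let ⟨v, h1, h2⟩ := isEqBwd_spec (Conv.bwd h t) hv
    ⟨_, v, .refl, h1, h2⟩

lemma exists_fwdPrefix {a u b : A} (p : ReflTransGen ar a u) (t : Conv hd ar u b) :
    ∃ (c : Conv hd ar a b) (s : Multiset A), c.mu = s + t.mu ∧ ∀ x ∈ s, ReflTransGen ar a x := by
  induction p using ReflTransGen.head_induction_on with
  | refl => exact ⟨t, 0, (zero_add _).symm, by simp⟩
  | @head a1 a2 h p ih =>
    obtain ⟨c, s, hmu, hs⟩ := ih
    refine ⟨.fwd h c, a1 ::ₘ s, by simp [mu, hmu], ?_⟩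
    intro x hx
    rcases Multiset.mem_cons.1 hx with rfl | hx
    · exact .refl
    · exact .head h (hs x hx)

lemma exists_eqPrefix {a u b : A} (p : ReflTransGen hd a u) (t : Conv hd ar u b) :
    ∃ (c : Conv hd ar a b) (s : Multiset A), c.mu = s + t.mu ∧ ∀ x ∈ s, ReflTransGen hd a x := by
  induction p using ReflTransGen.head_induction_on with
  | refl => exact ⟨t, 0, (zero_add _).symm, by simp⟩
  | @head a1 a2 h p ih =>
    obtain ⟨c, s, hmu, hs⟩ := ih
    refine ⟨.eq h c, a1 ::ₘ s, by simp [mu, hmu], ?_⟩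
    intro x hx
    rcases Multiset.mem_cons.1 hx with rfl | hx
    · exact .refl
    · exact .head h (hs x hx)

lemma exists_bwdRev {n v b : A} (p : ReflTransGen ar n v) (t : Conv hd ar n b) :
    ∃ (c : Conv hd ar v b) (s : Multiset A), c.mu = s + t.mu ∧ ∀ x ∈ s, TransGen ar n x := by
  induction p with
  | refl => exact ⟨t, 0, (zero_add _).symm, by simp⟩
  | @tail a1 a2 p h ih =>
    obtain ⟨c, s, hmu, hs⟩ := ih
    refine ⟨.bwd h c, a2 ::ₘ s, by simp [mu, hmu], ?_⟩
    intro x hx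
    rcases Multiset.mem_cons.1 hx with rfl | hx
    · exact Relation.TransGen.tail' p h
    · exact hs x hx

end Conv

end CRM

namespace CRM

open Relation

variable {A : Type*} {hd ar : A → A → Prop}

/-- the relation `⊢⊣* ∘ → ∘ ⊢⊣*` -/
def SRel (hd ar : A → A → Prop) (x y : A) : Prop :=
  ∃ p q, ReflTransGen hd x p ∧ ar p q ∧ ReflTransGen hd q y

lemma sRel_of_ar {x y : A} (h : ar x y) : SRel hd ar x y := ⟨x, y, .refl, h, .refl⟩

lemma sRel_of_hd_ar {x y z : A} (h1 : hd x y) (h2 : ar y z) : SRel hd ar x z :=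
  ⟨y, z, .single h1, h2, .refl⟩

lemma SRel.rtg_hd {x y z : A} (h : SRel hd ar x y) (h2 : ReflTransGen hd y z) :
    SRel hd ar x z := by
  obtain ⟨p, q, a1, a2, a3⟩ := h
  exact ⟨p, q, a1, a2, a3.trans h2⟩

lemma tg_rtg_hd {x y z : A} (h : TransGen (SRel hd ar) x y) (h2 : ReflTransGen hd y z) :
    TransGen (SRel hd ar) x z := by
  induction h with
  | single h' => exact .single (h'.rtg_hd h2)
  | tail h' step ih => exact h'.tail (step.rtg_hd h2)

lemma tg_rtg_ar {x y z : A} (h : TransGen (SRel hd ar) x y) (h2 : ReflTransGen ar y z) :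
    TransGen (SRel hd ar) x z := by
  induction h2 with
  | refl => exact h
  | tail _ step ih => exact ih.tail (sRel_of_ar step)

lemma s_rtg_ar {x y z : A} (h : SRel hd ar x y) (h2 : ReflTransGen ar y z) :
    TransGen (SRel hd ar) x z :=
  tg_rtg_ar (.single h) h2

lemma hd_tg_ar {x y z : A} (h : hd x y) (h2 : TransGen ar y z) :
    TransGen (SRel hd ar) x z := by
  obtain ⟨w, h1, h2'⟩ := (TransGen.head'_iff).1 h2
  exact s_rtg_ar (sRel_of_hd_ar h h1) h2'

lemma wf_of_no_chain {r : A → A → Prop}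
    (h : ¬ ∃ f : ℕ → A, ∀ n, r (f (n + 1)) (f n)) : WellFounded r := by
  constructor
  intro a
  by_contra ha
  let g : ℕ → {b : A // ¬ Acc r b} := fun n =>
    Nat.rec ⟨a, ha⟩ (fun _ p => ⟨(_root_.exists_not_acc_lt_of_not_acc p.2).choose,
      ((_root_.exists_not_acc_lt_of_not_acc p.2).choose_spec).1⟩) n
  exact h ⟨fun n => (g n).1,
    fun n => ((_root_.exists_not_acc_lt_of_not_acc (g n).2).choose_spec).2⟩

lemma rtg_hd_symm (hsym : ∀ a b, hd a b → hd b a) {x y : A}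
    (h : ReflTransGen hd x y) : ReflTransGen hd y x := by
  induction h with
  | refl => exact .refl
  | tail _ step ih => exact .head (hsym _ _ step) ih

section WF

variable (hwf : ¬ ∃ f : ℕ → A, ∀ n,
    Relation.Comp ar (Relation.ReflTransGen hd) (f n) (f (n + 1)))

include hwf

lemma wf_flip_S : WellFounded (flip (SRel hd ar)) := by
  apply wf_of_no_chain
  rintro ⟨f, hf⟩
  replace hf : ∀ n, SRel hd ar (f n) (f (n + 1)) := fun n => hf n
  refine hwf ⟨fun n => (hf n).choose, fun n => ?_⟩
  obtain ⟨q, h1, h2, h3⟩ := (hf n).choose_spec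
  obtain ⟨q', h1', h2', h3'⟩ := (hf (n + 1)).choose_spec
  exact ⟨q, h2, h3.trans h1'⟩

lemma wf_lt : WellFounded (fun x y : A => TransGen (SRel hd ar) y x) :=
  Subrelation.wf (fun h => Relation.transGen_swap.2 h) (wf_flip_S hwf).transGen

lemma no_s_cycle {b : A} (h : TransGen (SRel hd ar) b b) : False := by
  have := ((wf_flip_S hwf).transGen).isIrrefl
  exact this.irrefl b (Relation.transGen_swap.2 h)

end WF

end CRM

namespace CRM

open Relation

variable {A : Type*} {hd ar : A → A → Prop}

/-- shorthand for the multiset order -/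
def MLt (hd ar : A → A → Prop) : Multiset A → Multiset A → Prop :=
  TransGen (CutExpand (fun x y : A => TransGen (SRel hd ar) y x))

lemma mlt_cons {x : A} {s' s : Multiset A} (h : MLt hd ar s' s) :
    MLt hd ar (x ::ₘ s') (x ::ₘ s) := by
  refine TransGen.lift (fun m => x ::ₘ m) (fun u v huv => ?_) s' s h
  obtain ⟨t, y, hy, he⟩ := huv
  refine ⟨t, y, hy, ?_⟩
  rw [Multiset.cons_add, he, Multiset.cons_add]

lemma mlt_one_step {X s : Multiset A} {m a : A}
    (hs : ∀ x ∈ s, TransGen (SRel hd ar) m x) :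
    MLt hd ar (a ::ₘ (s + X)) (a ::ₘ m ::ₘ X) := by
  refine TransGen.single ⟨s, m, hs, ?_⟩
  simp only [← Multiset.singleton_add]
  abel

lemma mlt_two_step {X s : Multiset A} {m a : A}
    (hs : ∀ x ∈ s, TransGen (SRel hd ar) m x) :
    MLt hd ar (s + X) (a ::ₘ m ::ₘ X) := by
  have step2 : CutExpand (fun x y : A => TransGen (SRel hd ar) y x)
      (s + X) (a ::ₘ (s + X)) := by
    refine ⟨0, a, by simp, ?_⟩
    simp only [add_zero, ← Multiset.singleton_add]
    abel
  exact TransGen.head step2 (mlt_one_step hs)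

section Transform

variable (hsym : ∀ a b, hd a b → hd b a)
  (hi : ∀ a b c, ar b a → ar b c →
      ∃ u v, ReflTransGen ar a u ∧ ReflTransGen hd u v ∧ ReflTransGen ar c v)
  (hii : ∀ a b c, hd a b → ar b c →
      ∃ u v, TransGen ar a u ∧ ReflTransGen hd u v ∧ ReflTransGen ar c v)

include hsym hi hii

lemma valley_or_step : ∀ {a b : A} (c : Conv hd ar a b),
    c.isValley ∨ ∃ c' : Conv hd ar a b, MLt hd ar c'.mu c.mu := by
  intro a b c
  induction c with
  | nil => left; trivial
  | fwd h t ih =>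
    rcases ih with hv | ⟨t', ht'⟩
    · left; exact hv
    · right; exact ⟨.fwd h t', mlt_cons ht'⟩
  | @bwd a m b h t ih =>
    cases t with
    | nil => left; trivial
    | bwd h2 t2 =>
      rcases ih with hv | ⟨t', ht'⟩
      · left; exact hv
      · right; exact ⟨.bwd h t', mlt_cons ht'⟩
    | @fwd _ n _ h2 t2 =>
      -- peak : a ← m → n
      right
      obtain ⟨u, v, h1, h2', h3⟩ := hi a m n h h2
      obtain ⟨c3, s3, hmu3, hs3⟩ := Conv.exists_bwdRev h3 t2
      obtain ⟨c2, s2, hmu2, hs2⟩ := Conv.exists_eqPrefix h2' c3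
      obtain ⟨c1, s1, hmu1, hs1⟩ := Conv.exists_fwdPrefix h1 c2
      refine ⟨c1, ?_⟩
      have hmu : c1.mu = (s1 + s2 + s3) + t2.mu := by
        rw [hmu1, hmu2, hmu3]; abel
      have htarget : (Conv.bwd h (Conv.fwd h2 t2)).mu = a ::ₘ m ::ₘ t2.mu := rfl
      rw [hmu, htarget]
      refine mlt_two_step ?_
      intro x hx
      rcases Multiset.mem_add.1 hx with hx' | hx3
      · rcases Multiset.mem_add.1 hx' with hx1 | hx2
        · exact s_rtg_ar (sRel_of_ar h) (hs1 x hx1)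
        · exact tg_rtg_hd (s_rtg_ar (sRel_of_ar h) h1) (hs2 x hx2)
      · exact tg_rtg_ar (TransGen.single (sRel_of_ar h2)) (hs3 x hx3).to_reflTransGen
    | @eq _ n _ h2 t2 =>
      -- cliff : a ← m ⊢⊣ n
      right
      obtain ⟨u, v, h1, h2', h3⟩ := hii n m a (hsym m n h2) h
      obtain ⟨c3, s3, hmu3, hs3⟩ := Conv.exists_bwdRev h1.to_reflTransGen t2
      obtain ⟨c2, s2, hmu2, hs2⟩ := Conv.exists_eqPrefix (rtg_hd_symm hsym h2') c3
      obtain ⟨c1, s1, hmu1, hs1⟩ := Conv.exists_fwdPrefix h3 c2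
      refine ⟨c1, ?_⟩
      have hmu : c1.mu = (s1 + s2 + s3) + t2.mu := by
        rw [hmu1, hmu2, hmu3]; abel
      have htarget : (Conv.bwd h (Conv.eq h2 t2)).mu = a ::ₘ m ::ₘ t2.mu := rfl
      rw [hmu, htarget]
      refine mlt_two_step ?_
      intro x hx
      rcases Multiset.mem_add.1 hx with hx' | hx3
      · rcases Multiset.mem_add.1 hx' with hx1 | hx2
        · exact s_rtg_ar (sRel_of_ar h) (hs1 x hx1)
        · exact tg_rtg_hd (s_rtg_ar (sRel_of_ar h) h3) (hs2 x hx2)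
      · exact hd_tg_ar h2 (hs3 x hx3)
  | @eq a m b h t ih =>
    cases t with
    | nil => left; trivial
    | eq h2 t2 =>
      rcases ih with hv | ⟨t', ht'⟩
      · left; exact hv
      · right; exact ⟨.eq h t', mlt_cons ht'⟩
    | bwd h2 t2 =>
      rcases ih with hv | ⟨t', ht'⟩
      · left; exact hv
      · right; exact ⟨.eq h t', mlt_cons ht'⟩
    | @fwd _ n _ h2 t2 =>
      -- cliff : a ⊢⊣ m → n
      right
      obtain ⟨u, v, h1, h2', h3⟩ := hii a m n h h2
      obtain ⟨w, haw, hwu⟩ := (TransGen.head'_iff).1 h1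
      obtain ⟨c3, s3, hmu3, hs3⟩ := Conv.exists_bwdRev h3 t2
      obtain ⟨c2, s2, hmu2, hs2⟩ := Conv.exists_eqPrefix h2' c3
      obtain ⟨c1, s1, hmu1, hs1⟩ := Conv.exists_fwdPrefix hwu c2
      refine ⟨.fwd haw c1, ?_⟩
      have hmu : (Conv.fwd haw c1).mu = a ::ₘ ((s1 + s2 + s3) + t2.mu) := by
        show a ::ₘ c1.mu = _
        rw [hmu1, hmu2, hmu3]
        congr 1
        abel
      have htarget : (Conv.eq h (Conv.fwd h2 t2)).mu = a ::ₘ m ::ₘ t2.mu := rfl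
      rw [hmu, htarget]
      refine mlt_one_step ?_
      intro x hx
      rcases Multiset.mem_add.1 hx with hx' | hx3
      · rcases Multiset.mem_add.1 hx' with hx1 | hx2
        · exact s_rtg_ar (sRel_of_hd_ar (hsym a m h) haw) (hs1 x hx1)
        · exact tg_rtg_hd (s_rtg_ar (sRel_of_hd_ar (hsym a m h) haw) hwu) (hs2 x hx2)
      · exact tg_rtg_ar (TransGen.single (sRel_of_ar h2)) (hs3 x hx3).to_reflTransGen

end Transform

end CRM

namespace CRM

open Relation

variable {A : Type*} {hd ar : A → A → Prop}

lemma exists_conv {a b : A}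
    (h : ReflTransGen (fun x y => ar x y ∨ ar y x ∨ hd x y) a b) :
    ∃ _ : Conv hd ar a b, True := by
  induction h using ReflTransGen.head_induction_on with
  | refl => exact ⟨.nil _, trivial⟩
  | @head x y h' _ ih =>
    obtain ⟨c, -⟩ := ih
    rcases h' with h' | h' | h'
    · exact ⟨.fwd h' c, trivial⟩
    · exact ⟨.bwd h' c, trivial⟩
    · exact ⟨.eq h' c, trivial⟩

lemma main_valley
    (hsym : ∀ a b, hd a b → hd b a)
    (hwf : ¬ ∃ f : ℕ → A, ∀ n,
      Relation.Comp ar (Relation.ReflTransGen hd) (f n) (f (n + 1)))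
    (hi : ∀ a b c, ar b a → ar b c →
      ∃ u v, ReflTransGen ar a u ∧ ReflTransGen hd u v ∧ ReflTransGen ar c v)
    (hii : ∀ a b c, hd a b → ar b c →
      ∃ u v, TransGen ar a u ∧ ReflTransGen hd u v ∧ ReflTransGen ar c v)
    {a b : A} (c : Conv hd ar a b) :
    ∃ u v, ReflTransGen ar a u ∧ ReflTransGen hd u v ∧ ReflTransGen ar b v := by
  have wfc : WellFounded (MLt hd ar : Multiset A → Multiset A → Prop) :=
    ((wf_lt hwf).cutExpand).transGen
  suffices H : ∀ m : Multiset A, ∀ (a b : A) (c : Conv hd ar a b), c.mu = m →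
      ∃ u v, ReflTransGen ar a u ∧ ReflTransGen hd u v ∧ ReflTransGen ar b v by
    exact H _ a b c rfl
  intro m
  induction m using WellFounded.induction wfc with
  | _ m ih =>
    intro a b c hm
    rcases valley_or_step hsym hi hii c with hv | ⟨c', hc'⟩
    · exact Conv.isValley_spec c hv
    · exact ih c'.mu (hm ▸ hc') a b c' rfl

end CRM

/-- Corollary 2.7: necessary and sufficient conditions for CRM
with a `→⁺` step in condition (ii). -/
theorem crm_iff_criterion_plus {A : Type*} (hd ar : A → A → Prop)
    (hsym : ∀ a b, hd a b → hd b a)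
    (hwf : ¬ ∃ f : ℕ → A, ∀ n,
      Relation.Comp ar (Relation.ReflTransGen hd) (f n) (f (n + 1))) :
    (∀ a b, Relation.ReflTransGen (fun x y => ar x y ∨ ar y x ∨ hd x y) a b →
      ∃ u v, Relation.ReflTransGen ar a u ∧ Relation.ReflTransGen hd u v ∧
        Relation.ReflTransGen ar b v)
    ↔
    ((∀ a b c, ar b a → ar b c →
      ∃ u v, Relation.ReflTransGen ar a u ∧ Relation.ReflTransGen hd u v ∧
        Relation.ReflTransGen ar c v) ∧
     (∀ a b c, hd a b → ar b c →
      ∃ u v, Relation.TransGen ar a u ∧ Relation.ReflTransGen hd u v ∧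
        Relation.ReflTransGen ar c v)) := by
  constructor
  · intro crm
    constructor
    · intro a b c hba hbc
      exact crm a c (Relation.ReflTransGen.head (Or.inr (Or.inl hba))
        (Relation.ReflTransGen.single (Or.inl hbc)))
    · intro a b c hab hbc
      obtain ⟨u, v, h1, h2, h3⟩ := crm a c (Relation.ReflTransGen.head (Or.inr (Or.inr hab))
        (Relation.ReflTransGen.single (Or.inl hbc)))
      rcases (Relation.ReflTransGen.cases_head h1) with rfl | ⟨w, haw, hwu⟩
      · -- a ⊢⊣* v and c →* v : produces a cycle, contradiction with well-foundedness
        exfalso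
        have hvb : Relation.ReflTransGen hd v b :=
          (CRM.rtg_hd_symm hsym h2).tail hab
        have cyc : Relation.TransGen (CRM.SRel hd ar) b b :=
          CRM.tg_rtg_hd (CRM.s_rtg_ar (CRM.sRel_of_ar hbc) h3) hvb
        exact CRM.no_s_cycle hwf cyc
      · exact ⟨u, v, Relation.TransGen.head' haw hwu, h2, h3⟩
  · rintro ⟨hi, hii⟩ a b hab
    obtain ⟨c, -⟩ := CRM.exists_conv hab
    exact CRM.main_valley hsym hwf hi hii c
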